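/- (Proposition 4.1.) Let I be an ideal of ℝ[x] = MvPolynomial (Fin n) ℝ. The following are equivalent: (i) the quadratic module of I is Archimedean in ℝ[x]/I, i.e., there exist N ∈ ℕ, s ∈ ℕ, and polynomials q₁,…,q_s ∈ ℝ[x] such that (C N − Σ_{i=1}^n Xᵢ²) − Σ_{j=1}^s qⱼ² ∈ I; (ii) there exist m ∈ ℕ and I-spherical polynomials h₁,…,h_m ∈ ℝ[x] (i.e., Σᵢ hᵢ² − 1 ∈ I) such that the ℝ-subalgebra of ℝ[x]/I generated by the residue classes of h₁,…,h_m equals all of ℝ[x]/I (Algebra.adjoin ℝ {⟦h₁⟧,…,⟦h_m⟧} = ⊤). -/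

import Mathlib

open MvPolynomial

private lemma isSumSq_pow_two {R : Type*} [CommRing R] (a : R) : IsSumSq (a ^ 2) := by
  rw [sq]
  simpa using IsSumSq.sq_add a 0 IsSumSq.zero

private lemma isSumSq_sq_mul {R : Type*} [CommRing R] (a : R) {T : R} (hT : IsSumSq T) :
    IsSumSq (a ^ 2 * T) := by
  induction hT with
  | zero => simpa using IsSumSq.zero
  | @sq_add b S _ ih =>
    have e : a ^ 2 * (b * b + S) = (a * b) * (a * b) + a ^ 2 * S := by ring
    rw [e]
    exact IsSumSq.sq_add _ ih

private lemma isSumSq_sum_sq {R : Type*} [CommRing R] {ι : Type*} (s : Finset ι) (f : ι → R) :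
    IsSumSq (∑ i ∈ s, f i ^ 2) := by
  simp only [sq]
  exact IsSumSq.sum_mul_self s f

private lemma isSumSq_fin {R : Type*} [CommRing R] {σ : R} (h : IsSumSq σ) :
    ∃ (s : ℕ) (q : Fin s → R), σ = ∑ j, q j ^ 2 := by
  induction h with
  | zero => exact ⟨0, ![], by simp⟩
  | @sq_add a S _ ih =>
    obtain ⟨s, q, hq⟩ := ih
    refine ⟨s + 1, Fin.cons a q, ?_⟩
    rw [Fin.sum_univ_succ]
    simp [hq, sq]

/-- Proposition 4.1: the quadratic module of `I` is Archimedean in `ℝ[x]/I` if and only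
if there exist `I`-spherical polynomials whose residue classes generate `ℝ[x]/I` as an
`ℝ`-algebra. -/
theorem archimedean_iff_spherical_generators {n : ℕ}
    (I : Ideal (MvPolynomial (Fin n) ℝ)) :
    (∃ (N : ℕ) (s : ℕ) (q : Fin s → MvPolynomial (Fin n) ℝ),
      (C (N : ℝ) - ∑ i, X i ^ 2) - ∑ j, q j ^ 2 ∈ I) ↔
    (∃ (m : ℕ) (h : Fin m → MvPolynomial (Fin n) ℝ),
      ((∑ i, h i ^ 2) - 1 ∈ I) ∧
      Algebra.adjoin ℝ (Set.range fun i => Ideal.Quotient.mk I (h i)) = ⊤) := by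
  classical
  -- the quadratic module `M = (sums of squares) + I`
  set R := MvPolynomial (Fin n) ℝ with hR
  let M : R → Prop := fun p => ∃ σ : R, IsSumSq σ ∧ p - σ ∈ I
  have hMadd : ∀ p q : R, M p → M q → M (p + q) := by
    rintro p q ⟨σ, hσ, hpI⟩ ⟨τ, hτ, hqI⟩
    refine ⟨σ + τ, hσ.add hτ, ?_⟩
    have e : p + q - (σ + τ) = (p - σ) + (q - τ) := by ring
    rw [e]; exact I.add_mem hpI hqI
  have hMI : ∀ p ∈ I, M p := fun p hp => ⟨0, IsSumSq.zero, by simpa using hp⟩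
  have hMsq : ∀ p : R, M (p ^ 2) := fun p => ⟨p ^ 2, isSumSq_pow_two p, by simp⟩
  have hMmulsq : ∀ (a p : R), M p → M (a ^ 2 * p) := by
    rintro a p ⟨σ, hσ, hpI⟩
    refine ⟨a ^ 2 * σ, isSumSq_sq_mul a hσ, ?_⟩
    rw [← mul_sub]
    exact I.mul_mem_left _ hpI
  have hMconst : ∀ c : ℝ, 0 ≤ c → M (C c : R) := by
    intro c hc
    have e : ((C (Real.sqrt c) : R)) ^ 2 = C c := by
      rw [← map_pow, Real.sq_sqrt hc]
    exact ⟨C c, e ▸ isSumSq_pow_two _, by simp⟩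
  constructor
  · -- (i) → (ii)
    rintro ⟨N, s, q, hq⟩
    set r : ℝ := Real.sqrt ((N : ℝ) + 1) with hr
    have hrpos : (0 : ℝ) < r := Real.sqrt_pos.mpr (by positivity)
    set c : ℝ := r⁻¹ ^ 2 with hcdef
    have hc1 : c * ((N : ℝ) + 1) = 1 := by
      rw [hcdef, inv_pow, hr, Real.sq_sqrt (by positivity)]
      exact inv_mul_cancel₀ (by positivity)
    set h : Fin (n + s + 1) → R :=
      Fin.snoc (Fin.append (fun i => C r⁻¹ * X i) (fun j => C r⁻¹ * q j)) (C r⁻¹) with hhdef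
    have hsum : ∑ i, h i ^ 2 = C c * (∑ i, X i ^ 2 + ∑ j, q j ^ 2 + 1) := by
      rw [hhdef, Fin.sum_univ_castSucc]
      simp only [Fin.snoc_castSucc, Fin.snoc_last, Fin.sum_univ_add, Fin.append_left,
        Fin.append_right, mul_pow]
      rw [← Finset.mul_sum, ← Finset.mul_sum, ← map_pow, ← hcdef]
      ring
    refine ⟨n + s + 1, h, ?_, ?_⟩
    · -- spherical
      have hq' : (∑ i, X i ^ 2 + ∑ j, q j ^ 2) - C (N : ℝ) ∈ I := by
        have e2 : (∑ i, X i ^ 2 + ∑ j, q j ^ 2) - C (N : ℝ)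
            = -((C (N : ℝ) - ∑ i, X i ^ 2) - ∑ j, q j ^ 2) := by ring
        rw [e2]
        exact I.neg_mem hq
      have h1 : (C c : R) * (C (N : ℝ) + 1) = 1 := by
        rw [← C_1, ← C_add, ← C_mul, hc1]
      have e : (∑ i, h i ^ 2) - 1
          = C c * ((∑ i, X i ^ 2 + ∑ j, q j ^ 2) - C (N : ℝ)) := by
        rw [hsum]
        linear_combination h1
      rw [e]
      exact I.mul_mem_left _ hq'
    · -- generation
      have hXmem : ∀ i : Fin n,
          Ideal.Quotient.mk I (X i) ∈
            Algebra.adjoin ℝ (Set.range fun i => Ideal.Quotient.mk I (h i)) := by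
        intro i
        have hidx : h ((i.castAdd s).castSucc) = C r⁻¹ * X i := by
          rw [hhdef]
          simp [Fin.snoc_castSucc, Fin.append_left]
        have key : Ideal.Quotient.mk I (X i)
            = algebraMap ℝ _ r * Ideal.Quotient.mk I (h ((i.castAdd s).castSucc)) := by
          rw [hidx, map_mul]
          have : (Ideal.Quotient.mk I) (C r⁻¹) = algebraMap ℝ _ r⁻¹ := by
            rfl
          rw [this, ← mul_assoc, ← map_mul, mul_inv_cancel₀ (ne_of_gt hrpos), map_one, one_mul]
        rw [key]
        exact mul_mem (Subalgebra.algebraMap_mem _ r)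
          (Algebra.subset_adjoin ⟨(i.castAdd s).castSucc, rfl⟩)
      have htop : Algebra.adjoin ℝ (Set.range fun i : Fin n => Ideal.Quotient.mk I (X i)) = ⊤ := by
        have hmap := AlgHom.map_adjoin (Ideal.Quotient.mkₐ ℝ I) (Set.range (X : Fin n → R))
        rw [MvPolynomial.adjoin_range_X, Algebra.map_top, ← Set.range_comp] at hmap
        rw [(AlgHom.range_eq_top _).mpr (Ideal.Quotient.mkₐ_surjective ℝ I)] at hmap
        simp only [Ideal.Quotient.mkₐ_eq_mk] at hmap
        exact hmap.symm
      rw [eq_top_iff, ← htop]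
      exact Algebra.adjoin_le (by rintro _ ⟨i, rfl⟩; exact hXmem i)
  · -- (ii) → (i)
    rintro ⟨m, h, hsph, hgen⟩
    -- bounded elements
    let Bdd : R → Prop := fun p => ∃ N : ℝ, M (C N - p ^ 2)
    have hBup : ∀ (t : R) (N N' : ℝ), N ≤ N' → M (C N - t) → M (C N' - t) := by
      intro t N N' hle hM
      have e : (C N' - t : R) = C (N' - N) + (C N - t) := by
        rw [map_sub]; ring
      rw [e]
      exact hMadd _ _ (hMconst _ (by linarith)) hM
    have hBconst : ∀ c : ℝ, Bdd (C c) := by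
      intro c
      refine ⟨c ^ 2, ?_⟩
      have e : (C (c ^ 2) - (C c) ^ 2 : R) = 0 := by rw [map_pow]; ring
      rw [e]
      exact hMI 0 I.zero_mem
    have hBI : ∀ p ∈ I, Bdd p := by
      intro p hp
      refine ⟨0, ?_⟩
      have e : (C (0 : ℝ) - p ^ 2 : R) = -(p ^ 2) := by rw [map_zero]; ring
      rw [e]
      exact hMI _ (I.neg_mem (Ideal.pow_mem_of_mem I hp 2 (by norm_num)))
    have hBadd : ∀ p q : R, Bdd p → Bdd q → Bdd (p + q) := by
      rintro p q ⟨N, hN⟩ ⟨N', hN'⟩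
      refine ⟨N + N + N' + N', ?_⟩
      have e : (C (N + N + N' + N') - (p + q) ^ 2 : R)
          = (p - q) ^ 2 + ((C N - p ^ 2) + (C N - p ^ 2)
              + ((C N' - q ^ 2) + (C N' - q ^ 2))) := by
        rw [map_add, map_add, map_add]; ring
      rw [e]
      exact hMadd _ _ (hMsq _) (hMadd _ _ (hMadd _ _ hN hN) (hMadd _ _ hN' hN'))
    have hBmul : ∀ p q : R, Bdd p → Bdd q → Bdd (p * q) := by
      rintro p q ⟨N₀, hN₀⟩ ⟨N₀', hN₀'⟩
      set N : ℝ := max N₀ 0 with hNd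
      set N' : ℝ := max N₀' 0 with hN'd
      have hN : M (C N - p ^ 2) := hBup (p ^ 2) N₀ N (le_max_left _ _) hN₀
      have hN' : M (C N' - q ^ 2) := hBup (q ^ 2) N₀' N' (le_max_left _ _) hN₀'
      have hN'0 : 0 ≤ N' := le_max_right _ _
      refine ⟨N * N', ?_⟩
      have e : (C (N * N') - (p * q) ^ 2 : R)
          = p ^ 2 * (C N' - q ^ 2) + (C (Real.sqrt N')) ^ 2 * (C N - p ^ 2) := by
        rw [map_mul, ← map_pow, Real.sq_sqrt hN'0]; ring
      rw [e]
      exact hMadd _ _ (hMmulsq p _ hN') (hMmulsq _ _ hN)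
    have hBh : ∀ i : Fin m, Bdd (h i) := by
      intro i
      refine ⟨1, ∑ j ∈ Finset.univ.erase i, h j ^ 2, isSumSq_sum_sq _ _, ?_⟩
      have e : (C (1 : ℝ) - h i ^ 2 : R) - ∑ j ∈ Finset.univ.erase i, h j ^ 2
          = -((∑ j, h j ^ 2) - 1) := by
        rw [map_one, ← Finset.sum_erase_add Finset.univ _ (Finset.mem_univ i)]
        ring
      rw [e]
      exact I.neg_mem hsph
    -- everything in the subalgebra generated by the `h i` is bounded
    have hBadj : ∀ p ∈ Algebra.adjoin ℝ (Set.range h), Bdd p := by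
      intro p hp
      induction hp using Algebra.adjoin_induction with
      | mem x hx => obtain ⟨i, rfl⟩ := hx; exact hBh i
      | algebraMap r => rw [MvPolynomial.algebraMap_eq]; exact hBconst r
      | add x y _ _ hx hy => exact hBadd x y hx hy
      | mul x y _ _ hx hy => exact hBmul x y hx hy
    -- every polynomial is bounded
    have hBall : ∀ p : R, Bdd p := by
      intro p
      have hmap := AlgHom.map_adjoin (Ideal.Quotient.mkₐ ℝ I) (Set.range h)
      rw [← Set.range_comp] at hmap
      have hmk : Ideal.Quotient.mk I p ∈
          (Algebra.adjoin ℝ (Set.range h)).map (Ideal.Quotient.mkₐ ℝ I) := by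
        rw [hmap]
        have : (Set.range ((Ideal.Quotient.mkₐ ℝ I) ∘ h))
            = (Set.range fun i => Ideal.Quotient.mk I (h i)) := rfl
        rw [this, hgen]
        trivial
      obtain ⟨r, hr, hrp⟩ := hmk
      have hpr : p - r ∈ I := by
        rw [← Ideal.Quotient.eq_zero_iff_mem, map_sub]
        rw [show (Ideal.Quotient.mk I) r = (Ideal.Quotient.mk I) p from hrp]
        exact sub_self _
      have : p = r + (p - r) := by ring
      rw [this]
      exact hBadd _ _ (hBadj r hr) (hBI _ hpr)
    -- bound each variable and sum up
    choose Nf hNf using fun i : Fin n => hBall (X i)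
    have hsum : ∀ s : Finset (Fin n), M (C (∑ i ∈ s, Nf i) - ∑ i ∈ s, X i ^ 2) := by
      intro s
      induction s using Finset.induction with
      | empty => simpa using hMI 0 I.zero_mem
      | insert a s' ha ih =>
        rw [Finset.sum_insert ha, Finset.sum_insert ha]
        have e : (C (Nf a + ∑ i ∈ s', Nf i) - (X a ^ 2 + ∑ i ∈ s', X i ^ 2) : R)
            = (C (Nf a) - X a ^ 2) + (C (∑ i ∈ s', Nf i) - ∑ i ∈ s', X i ^ 2) := by
          rw [map_add]; ring
        rw [e]
        exact hMadd _ _ (hNf a) ih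
    have hfin : M (C ((⌈∑ i, Nf i⌉₊ : ℝ)) - ∑ i : Fin n, X i ^ 2) :=
      hBup _ _ _ (Nat.le_ceil _) (hsum Finset.univ)
    obtain ⟨σ, hσ, hmem⟩ := hfin
    obtain ⟨s, q, rfl⟩ := isSumSq_fin hσ
    exact ⟨⌈∑ i, Nf i⌉₊, s, q, hmem⟩
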